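/- Suppose L satisfies the hierarchy equations d_k(L) = [(L^k)_+, L] for all k ≥ 1, and let (E_n)_{n≥0} be the sequence in R determined by E_0 = 1 and the recursion n·E_n = − Σ_{k=1}^{n} ( d_k(E_{n−k}) + E_{n−k}·(L^k)_+ ) for n ≥ 1. Then E_n = (Ẽ_n)_+ for all n ≥ 0. (Theorem 2.1 of the paper.) -/

import Mathlib

open PowerSeries Finset
set_option linter.unusedSectionVars false

namespace Stmt2Aux

variable {R : Type*} [Ring R] [Algebra ℚ R]

/-- The operator `Δ = θ + 𝒟` on power series, where `θ` multiplies the `n`-th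
coefficient by `n` and `𝒟 = ∑ z^k d_k` acts coefficientwise. -/
noncomputable def Del (d : ℕ → R →+ R) (F : R⟦X⟧) : R⟦X⟧ :=
  PowerSeries.mk fun n => (n : ℚ) • PowerSeries.coeff n F
    + ∑ k ∈ Icc 1 n, d k (PowerSeries.coeff (n - k) F)

theorem coeff_Del (d : ℕ → R →+ R) (F : R⟦X⟧) (n : ℕ) :
    coeff n (Del d F) = (n : ℚ) • coeff n F
      + ∑ k ∈ Icc 1 n, d k (coeff (n - k) F) :=
  coeff_mk _ _

theorem dk_one (d : ℕ → R →+ R)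
    (hder : ∀ k, 1 ≤ k → ∀ a b, d k (a * b) = d k a * b + a * d k b)
    {k : ℕ} (hk : 1 ≤ k) : d k (1 : R) = 0 := by
  have h := hder k hk 1 1
  simp only [one_mul, mul_one] at h
  exact (left_eq_add.mp h)

theorem Del_sub (d : ℕ → R →+ R) (F G : R⟦X⟧) :
    Del d (F - G) = Del d F - Del d G := by
  ext n
  simp only [coeff_Del, map_sub, smul_sub, Finset.sum_sub_distrib]
  abel

theorem Del_one (d : ℕ → R →+ R)
    (hder : ∀ k, 1 ≤ k → ∀ a b, d k (a * b) = d k a * b + a * d k b) :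
    Del d (1 : R⟦X⟧) = 0 := by
  ext n
  rw [coeff_Del]
  rcases n with _ | m
  · simp
  · rw [PowerSeries.coeff_one, if_neg (Nat.succ_ne_zero m)]
    simp only [smul_zero, zero_add, map_zero]
    rw [Finset.sum_eq_zero]
    intro k hk
    rw [Finset.mem_Icc] at hk
    by_cases hkm : k = m + 1
    · subst hkm
      simp only [Nat.sub_self, PowerSeries.coeff_zero_eq_constantCoeff, map_one]
      exact dk_one d hder hk.1
    · have h1 : m + 1 - k ≠ 0 := by omega
      rw [PowerSeries.coeff_one, if_neg h1, map_zero]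

theorem Del_mul (d : ℕ → R →+ R)
    (hder : ∀ k, 1 ≤ k → ∀ a b, d k (a * b) = d k a * b + a * d k b)
    (F G : R⟦X⟧) :
    Del d (F * G) = Del d F * G + F * Del d G := by
  ext n
  rw [map_add, coeff_Del, coeff_mul, coeff_mul, coeff_mul]
  have hθ : (n : ℚ) • ∑ p ∈ antidiagonal n, coeff p.1 F * coeff p.2 G
      = ∑ p ∈ antidiagonal n,
          (((p.1 : ℚ) • coeff p.1 F) * coeff p.2 G
            + coeff p.1 F * ((p.2 : ℚ) • coeff p.2 G)) := by
    rw [Finset.smul_sum]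
    refine Finset.sum_congr rfl fun p hp => ?_
    rw [Finset.HasAntidiagonal.mem_antidiagonal] at hp
    rw [smul_mul_assoc, mul_smul_comm, ← add_smul, ← Nat.cast_add, hp]
  have hexp : ∑ k ∈ Icc 1 n, d k (coeff (n - k) (F * G))
      = (∑ k ∈ Icc 1 n, ∑ p ∈ antidiagonal (n - k),
          d k (coeff p.1 F) * coeff p.2 G)
        + ∑ k ∈ Icc 1 n, ∑ p ∈ antidiagonal (n - k),
            coeff p.1 F * d k (coeff p.2 G) := by
    rw [← Finset.sum_add_distrib]
    refine Finset.sum_congr rfl fun k hk => ?_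
    rw [Finset.mem_Icc] at hk
    rw [coeff_mul, map_sum, ← Finset.sum_add_distrib]
    exact Finset.sum_congr rfl fun p _ => hder k hk.1 _ _
  have hT1 : ∑ k ∈ Icc 1 n, ∑ p ∈ antidiagonal (n - k),
        d k (coeff p.1 F) * coeff p.2 G
      = ∑ p ∈ antidiagonal n,
          (∑ k ∈ Icc 1 p.1, d k (coeff (p.1 - k) F)) * coeff p.2 G := by
    have : ∀ p ∈ antidiagonal n,
        (∑ k ∈ Icc 1 p.1, d k (coeff (p.1 - k) F)) * coeff p.2 G
        = ∑ k ∈ Icc 1 p.1, d k (coeff (p.1 - k) F) * coeff p.2 G := by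
      intro p _; rw [Finset.sum_mul]
    rw [Finset.sum_congr rfl this, Finset.sum_sigma' (Icc 1 n),
      Finset.sum_sigma' (antidiagonal n)]
    refine Finset.sum_nbij' (fun x => ⟨(x.2.1 + x.1, x.2.2), x.1⟩)
      (fun y => ⟨y.2, (y.1.1 - y.2, y.1.2)⟩) ?_ ?_ ?_ ?_ ?_
    · rintro ⟨k, a, b⟩ hx
      simp only [Finset.mem_sigma, Finset.mem_Icc, Finset.HasAntidiagonal.mem_antidiagonal] at hx ⊢
      omega
    · rintro ⟨⟨a, b⟩, k⟩ hy
      simp only [Finset.mem_sigma, Finset.mem_Icc, Finset.HasAntidiagonal.mem_antidiagonal] at hy ⊢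
      omega
    · rintro ⟨k, a, b⟩ hx
      simp only [Finset.mem_sigma, Finset.mem_Icc, Finset.HasAntidiagonal.mem_antidiagonal] at hx
      simp only [Sigma.mk.inj_iff, heq_eq_eq, Prod.mk.injEq, and_true, true_and]
      omega
    · rintro ⟨⟨a, b⟩, k⟩ hy
      simp only [Finset.mem_sigma, Finset.mem_Icc, Finset.HasAntidiagonal.mem_antidiagonal] at hy
      simp only [Sigma.mk.inj_iff, heq_eq_eq, Prod.mk.injEq, and_true, true_and]
      omega
    · rintro ⟨k, a, b⟩ hx
      simp only [Finset.mem_sigma, Finset.mem_Icc, Finset.HasAntidiagonal.mem_antidiagonal] at hx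
      simp only [Nat.add_sub_cancel]
  have hT2 : ∑ k ∈ Icc 1 n, ∑ p ∈ antidiagonal (n - k),
        coeff p.1 F * d k (coeff p.2 G)
      = ∑ p ∈ antidiagonal n,
          coeff p.1 F * ∑ k ∈ Icc 1 p.2, d k (coeff (p.2 - k) G) := by
    have : ∀ p ∈ antidiagonal n,
        coeff p.1 F * ∑ k ∈ Icc 1 p.2, d k (coeff (p.2 - k) G)
        = ∑ k ∈ Icc 1 p.2, coeff p.1 F * d k (coeff (p.2 - k) G) := by
      intro p _; rw [Finset.mul_sum]
    rw [Finset.sum_congr rfl this, Finset.sum_sigma' (Icc 1 n),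
      Finset.sum_sigma' (antidiagonal n)]
    refine Finset.sum_nbij' (fun x => ⟨(x.2.1, x.2.2 + x.1), x.1⟩)
      (fun y => ⟨y.2, (y.1.1, y.1.2 - y.2)⟩) ?_ ?_ ?_ ?_ ?_
    · rintro ⟨k, a, b⟩ hx
      simp only [Finset.mem_sigma, Finset.mem_Icc, Finset.HasAntidiagonal.mem_antidiagonal] at hx ⊢
      omega
    · rintro ⟨⟨a, b⟩, k⟩ hy
      simp only [Finset.mem_sigma, Finset.mem_Icc, Finset.HasAntidiagonal.mem_antidiagonal] at hy ⊢
      omega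
    · rintro ⟨k, a, b⟩ hx
      simp only [Finset.mem_sigma, Finset.mem_Icc, Finset.HasAntidiagonal.mem_antidiagonal] at hx
      simp only [Sigma.mk.inj_iff, heq_eq_eq, Prod.mk.injEq, and_true, true_and]
      omega
    · rintro ⟨⟨a, b⟩, k⟩ hy
      simp only [Finset.mem_sigma, Finset.mem_Icc, Finset.HasAntidiagonal.mem_antidiagonal] at hy
      simp only [Sigma.mk.inj_iff, heq_eq_eq, Prod.mk.injEq, and_true, true_and]
      omega
    · rintro ⟨k, a, b⟩ hx
      simp only [Finset.mem_sigma, Finset.mem_Icc, Finset.HasAntidiagonal.mem_antidiagonal] at hx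
      simp only [Nat.add_sub_cancel]
  calc (n : ℚ) • ∑ p ∈ antidiagonal n, coeff p.1 F * coeff p.2 G
        + ∑ k ∈ Icc 1 n, d k (coeff (n - k) (F * G))
      = (∑ p ∈ antidiagonal n,
          (((p.1 : ℚ) • coeff p.1 F) * coeff p.2 G
            + coeff p.1 F * ((p.2 : ℚ) • coeff p.2 G)))
        + ((∑ p ∈ antidiagonal n,
            (∑ k ∈ Icc 1 p.1, d k (coeff (p.1 - k) F)) * coeff p.2 G)
          + ∑ p ∈ antidiagonal n,
              coeff p.1 F * ∑ k ∈ Icc 1 p.2, d k (coeff (p.2 - k) G)) := by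
        rw [hθ, hexp, hT1, hT2]
    _ = ∑ p ∈ antidiagonal n, coeff p.1 (Del d F) * coeff p.2 G
        + ∑ p ∈ antidiagonal n, coeff p.1 F * coeff p.2 (Del d G) := by
        simp only [coeff_Del, add_mul, mul_add, Finset.sum_add_distrib]
        abel

/-- the series `zL = z·L`. -/
noncomputable def zLs (L : R) : R⟦X⟧ :=
  PowerSeries.mk fun n => if n = 1 then L else 0

theorem coeff_mul_zLs (L : R) (A : R⟦X⟧) (n : ℕ) :
    coeff (n + 1) (A * zLs L) = coeff n A * L := by
  rw [coeff_mul, Finset.sum_eq_single (n, 1)]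
  · simp [zLs]
  · rintro ⟨a, b⟩ hab hne
    rw [Finset.HasAntidiagonal.mem_antidiagonal] at hab
    have hb : b ≠ 1 := by
      rintro rfl
      exact hne (by simp [Prod.ext_iff]; omega)
    simp [zLs, hb]
  · intro h
    exact absurd (by rw [Finset.HasAntidiagonal.mem_antidiagonal]) h

theorem coeff_zero_mul_zLs (L : R) (A : R⟦X⟧) :
    coeff 0 (A * zLs L) = 0 := by
  simp [coeff_mul, Finset.Nat.antidiagonal_zero, zLs]

theorem coeff_zLs_mul (L : R) (A : R⟦X⟧) (n : ℕ) :
    coeff (n + 1) (zLs L * A) = L * coeff n A := by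
  rw [coeff_mul, Finset.sum_eq_single (1, n)]
  · simp [zLs]
  · rintro ⟨a, b⟩ hab hne
    rw [Finset.HasAntidiagonal.mem_antidiagonal] at hab
    have ha : a ≠ 1 := by
      rintro rfl
      exact hne (by simp [Prod.ext_iff]; omega)
    simp [zLs, ha]
  · intro h
    exact absurd (by rw [Finset.HasAntidiagonal.mem_antidiagonal]; omega) h

theorem coeff_zero_zLs_mul (L : R) (A : R⟦X⟧) :
    coeff 0 (zLs L * A) = 0 := by
  simp [coeff_mul, Finset.Nat.antidiagonal_zero, zLs]


section Main

variable (Pm : R →ₗ[ℚ] R) (d : ℕ → R →+ R) (L : R) (Et : ℕ → R)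

/-- `B(z) = ∑_{k≥1} (L^k)_+ z^k`. -/
noncomputable def Bser : R⟦X⟧ :=
  PowerSeries.mk fun k => if k = 0 then 0 else L ^ k - Pm (L ^ k)

/-- `C(z) = ∑_{k≥1} (L^k)_- z^k`. -/
noncomputable def Cser : R⟦X⟧ :=
  PowerSeries.mk fun k => if k = 0 then 0 else Pm (L ^ k)

/-- `M(z) = ∑_n (Ẽ_n)_- z^n`. -/
noncomputable def Mser : R⟦X⟧ := PowerSeries.mk fun n => Pm (Et n)

/-- `E(z) = ∑_n (Ẽ_n)_+ z^n`. -/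
noncomputable def Eser : R⟦X⟧ := PowerSeries.mk fun n => Et n - Pm (Et n)

/-- `Y = ΔM + (1−M)·C`. -/
noncomputable def Yser : R⟦X⟧ :=
  Del d (Mser Pm Et) + (1 - Mser Pm Et) * Cser Pm L

theorem hstar
    (hder : ∀ k, 1 ≤ k → ∀ a b, d k (a * b) = d k a * b + a * d k b)
    (hhier : ∀ k, 1 ≤ k →
      d k L = (L ^ k - Pm (L ^ k)) * L - L * (L ^ k - Pm (L ^ k))) :
    Del d (1 - zLs L) + Cser Pm L * (1 - zLs L) + (1 - zLs L) * Bser Pm L = 0 := by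
  have hCz : Cser Pm L * (1 - zLs L) = Cser Pm L - Cser Pm L * zLs L := by
    noncomm_ring
  have hBz : (1 - zLs L) * Bser Pm L = Bser Pm L - zLs L * Bser Pm L := by
    noncomm_ring
  ext n
  rw [map_add, map_add, hCz, hBz, map_sub, map_sub, coeff_Del, map_zero]
  match n with
  | 0 =>
    simp [coeff_zero_mul_zLs, coeff_zero_zLs_mul, Bser, Cser, coeff_mk]
  | 1 =>
    have hc0 : coeff 0 (1 - zLs L) = 1 := by simp [zLs, coeff_mk, map_sub]
    have hc1 : coeff 1 (1 - zLs L) = -L := by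
      rw [map_sub, PowerSeries.coeff_one, if_neg one_ne_zero]
      simp [zLs, coeff_mk]
    rw [Finset.Icc_self, Finset.sum_singleton, show (1:ℕ) - 1 = 0 from rfl,
      hc0, hc1, dk_one d hder le_rfl, Nat.cast_one, one_smul, add_zero]
    have eC1 : coeff 1 (Cser Pm L) = Pm L := by simp [Cser, coeff_mk]
    have eC2 : coeff 1 (Cser Pm L * zLs L) = 0 := by
      rw [show (1:ℕ) = 0 + 1 from rfl, coeff_mul_zLs]
      simp [Cser, coeff_mk]
    have eB1 : coeff 1 (Bser Pm L) = L - Pm L := by simp [Bser, coeff_mk]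
    have eB2 : coeff 1 (zLs L * Bser Pm L) = 0 := by
      rw [show (1:ℕ) = 0 + 1 from rfl, coeff_zLs_mul]
      simp [Bser, coeff_mk]
    rw [eC1, eC2, eB1, eB2]
    abel
  | (m + 2) =>
    have hc2 : coeff (m + 2) (1 - zLs L) = 0 := by
      rw [map_sub, PowerSeries.coeff_one, if_neg (by omega : ¬ m + 2 = 0)]
      simp [zLs, coeff_mk, show ¬ m + 2 = 1 from by omega]
    rw [hc2, smul_zero, zero_add]
    have hsum : ∑ k ∈ Icc 1 (m + 2), d k (coeff (m + 2 - k) (1 - zLs L))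
        = - d (m + 1) L := by
      rw [Finset.sum_eq_single (m + 1)]
      · have : coeff (m + 2 - (m + 1)) (1 - zLs L) = -L := by
          rw [show m + 2 - (m + 1) = 1 from by omega, map_sub,
            PowerSeries.coeff_one, if_neg one_ne_zero]
          simp [zLs, coeff_mk]
        rw [this, map_neg]
      · intro k hk hne
        rw [Finset.mem_Icc] at hk
        by_cases hk2 : k = m + 2
        · subst hk2
          rw [Nat.sub_self]
          have : coeff 0 (1 - zLs L) = 1 := by simp [zLs, coeff_mk, map_sub]
          rw [this, dk_one d hder hk.1]
        · have h1 : ¬ m + 2 - k = 0 := by omega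
          have h2 : ¬ m + 2 - k = 1 := by omega
          rw [map_sub, PowerSeries.coeff_one, if_neg h1]
          simp [zLs, coeff_mk, h2]
      · intro h
        exact absurd (Finset.mem_Icc.mpr (by omega)) h
    rw [hsum, hhier (m + 1) (by omega)]
    have e1 : coeff (m + 2) (Cser Pm L) = Pm (L ^ (m + 2)) := by
      simp [Cser, coeff_mk]
    have e2 : coeff (m + 2) (Cser Pm L * zLs L) = Pm (L ^ (m + 1)) * L := by
      rw [show m + 2 = (m + 1) + 1 from rfl, coeff_mul_zLs]
      simp [Cser, coeff_mk]
    have e3 : coeff (m + 2) (Bser Pm L) = L ^ (m + 2) - Pm (L ^ (m + 2)) := by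
      simp [Bser, coeff_mk]
    have e4 : coeff (m + 2) (zLs L * Bser Pm L)
        = L * (L ^ (m + 1) - Pm (L ^ (m + 1))) := by
      rw [show m + 2 = (m + 1) + 1 from rfl, coeff_zLs_mul]
      simp [Bser, coeff_mk]
    rw [e1, e2, e3, e4]
    have hp : L ^ (m + 2) = L ^ (m + 1) * L := pow_succ L (m + 1)
    rw [hp]
    noncomm_ring

theorem hF2 (hone : Pm 1 = 0) (hEt0 : Et 0 = 1) (hEt1 : Et 1 = -L)
    (hEtrec : ∀ n, 1 ≤ n → Et (n + 1) = Pm (Et n) * L) :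
    Eser Pm Et = (1 - Mser Pm Et) * (1 - zLs L) := by
  have hz : (1 - Mser Pm Et) * (1 - zLs L)
      = (1 - Mser Pm Et) - (1 - Mser Pm Et) * zLs L := by noncomm_ring
  ext n
  rw [hz, map_sub]
  match n with
  | 0 =>
    simp [Eser, Mser, coeff_mk, map_sub, coeff_zero_mul_zLs, hEt0, hone]
  | 1 =>
    rw [coeff_mul_zLs (n := 0), map_sub, map_sub, PowerSeries.coeff_one,
      PowerSeries.coeff_one]
    simp [Eser, Mser, coeff_mk, hEt0, hEt1, hone]
    abel
  | (m + 2) =>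
    rw [coeff_mul_zLs (n := m + 1), map_sub, map_sub, PowerSeries.coeff_one,
      PowerSeries.coeff_one, if_neg (by omega : ¬ m + 2 = 0),
      if_neg (by omega : ¬ m + 1 = 0)]
    simp only [Eser, Mser, coeff_mk, zero_sub, neg_mul]
    rw [hEtrec (m + 1) (by omega)]
    abel

theorem MI (hone : Pm 1 = 0)
    (hder : ∀ k, 1 ≤ k → ∀ a b, d k (a * b) = d k a * b + a * d k b)
    (hhier : ∀ k, 1 ≤ k →
      d k L = (L ^ k - Pm (L ^ k)) * L - L * (L ^ k - Pm (L ^ k)))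
    (hEt0 : Et 0 = 1) (hEt1 : Et 1 = -L)
    (hEtrec : ∀ n, 1 ≤ n → Et (n + 1) = Pm (Et n) * L) :
    Del d (Eser Pm Et) + Yser Pm d L Et * (1 - zLs L)
      + Eser Pm Et * Bser Pm L = 0 := by
  rw [hF2 Pm L Et hone hEt0 hEt1 hEtrec]
  rw [Del_mul d hder]
  rw [Del_sub, Del_one d hder]
  have hD1 : Del d (1 - zLs L)
      = -(Cser Pm L * (1 - zLs L) + (1 - zLs L) * Bser Pm L) := by
    have h := hstar Pm d L hder hhier
    rw [add_assoc] at h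
    exact eq_neg_of_add_eq_zero_left h
  rw [hD1]
  unfold Yser
  noncomm_ring

theorem PmY (hidem : ∀ x, Pm (Pm x) = Pm x) (hone : Pm 1 = 0)
    (hmm : ∀ x y, Pm (Pm x * Pm y) = Pm x * Pm y)
    (hdP : ∀ k, 1 ≤ k → ∀ x, d k (Pm x) = Pm (d k x))
    (hEt0 : Et 0 = 1) (n : ℕ) :
    Pm (coeff n (Yser Pm d L Et)) = coeff n (Yser Pm d L Et) := by
  unfold Yser
  rw [map_add, map_add, coeff_Del, coeff_mul]
  rw [map_add, map_smul, map_sum, map_sum]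
  congr 1
  · congr 1
    · rw [show coeff n (Mser Pm Et) = Pm (Et n) from coeff_mk _ _, hidem]
    · refine Finset.sum_congr rfl fun k hk => ?_
      rw [Finset.mem_Icc] at hk
      rw [show coeff (n - k) (Mser Pm Et) = Pm (Et (n - k)) from coeff_mk _ _]
      simp only [hdP k hk.1, hidem]
  · refine Finset.sum_congr rfl fun p _ => ?_
    rcases p with ⟨a, b⟩
    match b with
    | 0 =>
      have : coeff 0 (Cser Pm L) = 0 := by simp [Cser, coeff_mk]
      simp [this]
    | (j + 1) =>
      have hC : coeff (j + 1) (Cser Pm L) = Pm (L ^ (j + 1)) := by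
        simp [Cser, coeff_mk]
      match a with
      | 0 =>
        have hM : coeff 0 ((1 : R⟦X⟧) - Mser Pm Et) = 1 := by
          simp [Mser, coeff_mk, map_sub, hEt0, hone]
        simp only [hM, hC, one_mul, hidem]
      | (i + 1) =>
        have hM : coeff (i + 1) ((1 : R⟦X⟧) - Mser Pm Et)
            = -Pm (Et (i + 1)) := by
          rw [map_sub, PowerSeries.coeff_one, if_neg (by omega : ¬ i + 1 = 0)]
          simp [Mser, coeff_mk]
        simp only [hM, hC, neg_mul, map_neg, neg_inj]
        exact hmm (Et (i + 1)) (L ^ (j + 1))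

theorem PmDelEs (hidem : ∀ x, Pm (Pm x) = Pm x)
    (hdP : ∀ k, 1 ≤ k → ∀ x, d k (Pm x) = Pm (d k x)) (n : ℕ) :
    Pm (coeff n (Del d (Eser Pm Et))) = 0 := by
  have hPmEs : ∀ j, Pm (coeff j (Eser Pm Et)) = 0 := by
    intro j
    rw [show coeff j (Eser Pm Et) = Et j - Pm (Et j) from coeff_mk _ _]
    rw [map_sub, hidem, sub_self]
  rw [coeff_Del, map_add, map_smul, hPmEs, smul_zero, zero_add, map_sum]
  refine Finset.sum_eq_zero fun k hk => ?_
  rw [Finset.mem_Icc] at hk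
  rw [show coeff (n - k) (Eser Pm Et) = Et (n - k) - Pm (Et (n - k)) from
    coeff_mk _ _]
  rw [map_sub, map_sub, hdP k hk.1, hidem, sub_self]

theorem PmEsBs (hpp : ∀ x y, Pm ((x - Pm x) * (y - Pm y)) = 0) (n : ℕ) :
    Pm (coeff n (Eser Pm Et * Bser Pm L)) = 0 := by
  rw [coeff_mul, map_sum]
  refine Finset.sum_eq_zero fun p _ => ?_
  rcases p with ⟨a, b⟩
  match b with
  | 0 =>
    have : coeff 0 (Bser Pm L) = 0 := by simp [Bser, coeff_mk]
    simp [this]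
  | (j + 1) =>
    have hB : coeff (j + 1) (Bser Pm L) = L ^ (j + 1) - Pm (L ^ (j + 1)) := by
      simp [Bser, coeff_mk]
    rw [show coeff (a, j + 1).1 (Eser Pm Et)
      = Et a - Pm (Et a) from coeff_mk _ _, hB]
    exact hpp (Et a) (L ^ (j + 1))

theorem Yzero (hidem : ∀ x, Pm (Pm x) = Pm x) (hone : Pm 1 = 0)
    (hmm : ∀ x y, Pm (Pm x * Pm y) = Pm x * Pm y)
    (hpp : ∀ x y, Pm ((x - Pm x) * (y - Pm y)) = 0)
    (hder : ∀ k, 1 ≤ k → ∀ a b, d k (a * b) = d k a * b + a * d k b)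
    (hdP : ∀ k, 1 ≤ k → ∀ x, d k (Pm x) = Pm (d k x))
    (hhier : ∀ k, 1 ≤ k →
      d k L = (L ^ k - Pm (L ^ k)) * L - L * (L ^ k - Pm (L ^ k)))
    (hEt0 : Et 0 = 1) (hEt1 : Et 1 = -L)
    (hEtrec : ∀ n, 1 ≤ n → Et (n + 1) = Pm (Et n) * L) :
    ∀ n, coeff n (Yser Pm d L Et) = 0 := by
  have hMI := MI Pm d L Et hone hder hhier hEt0 hEt1 hEtrec
  have key : ∀ n, Pm (coeff n (Yser Pm d L Et * (1 - zLs L))) = 0 := by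
    intro n
    have h0 : coeff n (Del d (Eser Pm Et) + Yser Pm d L Et * (1 - zLs L)
        + Eser Pm Et * Bser Pm L) = 0 := by rw [hMI, map_zero]
    rw [map_add, map_add] at h0
    have h1 := congrArg Pm h0
    rw [map_add, map_add, map_zero, PmDelEs Pm d Et hidem hdP,
      PmEsBs Pm L Et hpp, zero_add, add_zero] at h1
    exact h1
  have hexp : ∀ n, coeff (n + 1) (Yser Pm d L Et * (1 - zLs L))
      = coeff (n + 1) (Yser Pm d L Et)
        - coeff n (Yser Pm d L Et) * L := by
    intro n
    rw [show Yser Pm d L Et * (1 - zLs L)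
      = Yser Pm d L Et - Yser Pm d L Et * zLs L from by noncomm_ring, map_sub,
      coeff_mul_zLs]
  intro n
  induction n with
  | zero =>
    have h0 : coeff 0 (Yser Pm d L Et * (1 - zLs L))
        = coeff 0 (Yser Pm d L Et) := by
      rw [show Yser Pm d L Et * (1 - zLs L)
        = Yser Pm d L Et - Yser Pm d L Et * zLs L from by noncomm_ring, map_sub,
        coeff_zero_mul_zLs, sub_zero]
    have := key 0
    rw [h0, PmY Pm d L Et hidem hone hmm hdP hEt0] at this
    exact this
  | succ n ih =>
    have := key (n + 1)
    rw [hexp n, ih, zero_mul, sub_zero,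
      PmY Pm d L Et hidem hone hmm hdP hEt0] at this
    exact this

theorem Gn (hidem : ∀ x, Pm (Pm x) = Pm x) (hone : Pm 1 = 0)
    (hmm : ∀ x y, Pm (Pm x * Pm y) = Pm x * Pm y)
    (hpp : ∀ x y, Pm ((x - Pm x) * (y - Pm y)) = 0)
    (hder : ∀ k, 1 ≤ k → ∀ a b, d k (a * b) = d k a * b + a * d k b)
    (hdP : ∀ k, 1 ≤ k → ∀ x, d k (Pm x) = Pm (d k x))
    (hhier : ∀ k, 1 ≤ k →
      d k L = (L ^ k - Pm (L ^ k)) * L - L * (L ^ k - Pm (L ^ k)))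
    (hEt0 : Et 0 = 1) (hEt1 : Et 1 = -L)
    (hEtrec : ∀ n, 1 ≤ n → Et (n + 1) = Pm (Et n) * L) :
    ∀ n : ℕ, 1 ≤ n → (n : ℚ) • coeff n (Eser Pm Et)
      = -∑ k ∈ Finset.Icc 1 n,
        (d k (coeff (n - k) (Eser Pm Et))
          + coeff (n - k) (Eser Pm Et) * (L ^ k - Pm (L ^ k))) := by
  intro n hn
  have hY : Yser Pm d L Et = 0 := by
    ext m
    rw [Yzero Pm d L Et hidem hone hmm hpp hder hdP hhier hEt0 hEt1 hEtrec m,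
      map_zero]
  have hMI := MI Pm d L Et hone hder hhier hEt0 hEt1 hEtrec
  rw [hY, zero_mul, add_zero] at hMI
  have h0 := congrArg (coeff n) hMI
  rw [map_add, map_zero, coeff_Del] at h0
  have hEB : coeff n (Eser Pm Et * Bser Pm L)
      = ∑ k ∈ Finset.Icc 1 n,
          coeff (n - k) (Eser Pm Et) * (L ^ k - Pm (L ^ k)) := by
    rw [coeff_mul]
    have hswap : ∑ p ∈ antidiagonal n,
        coeff p.1 (Eser Pm Et) * coeff p.2 (Bser Pm L)
        = ∑ p ∈ antidiagonal n,
            coeff p.2 (Eser Pm Et) * coeff p.1 (Bser Pm L) := by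
      rw [← Finset.Nat.sum_antidiagonal_swap
        (f := fun p => coeff p.2 (Eser Pm Et) * coeff p.1 (Bser Pm L))]
      simp
    rw [hswap, Finset.Nat.sum_antidiagonal_eq_sum_range_succ_mk]
    rw [Finset.range_eq_Ico, Finset.sum_eq_sum_Ico_succ_bot (by omega : 0 < n + 1)]
    have hB0 : coeff 0 (Bser Pm L) = 0 := by simp [Bser, coeff_mk]
    rw [hB0, mul_zero, zero_add, Finset.Ico_add_one_right_eq_Icc]
    refine Finset.sum_congr rfl fun k hk => ?_
    rw [Finset.mem_Icc] at hk
    have : coeff k (Bser Pm L) = L ^ k - Pm (L ^ k) := by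
      simp [Bser, coeff_mk, show ¬ k = 0 from by omega]
    rw [this]
  rw [hEB] at h0
  have h2 := eq_neg_of_add_eq_zero_left h0
  have h3 : (n : ℚ) • coeff n (Eser Pm Et)
      = -(∑ k ∈ Finset.Icc 1 n,
            coeff (n - k) (Eser Pm Et) * (L ^ k - Pm (L ^ k)))
        - ∑ k ∈ Finset.Icc 1 n, d k (coeff (n - k) (Eser Pm Et)) :=
    eq_sub_iff_add_eq.mpr h2
  rw [Finset.sum_add_distrib, h3]
  abel

end Main

end Stmt2Aux

theorem stmt_2 {R : Type*} [Ring R] [Algebra ℚ R]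
    (Pm : R →ₗ[ℚ] R)
    (hidem : ∀ x, Pm (Pm x) = Pm x)
    (hone : Pm 1 = 0)
    (hmm : ∀ x y, Pm (Pm x * Pm y) = Pm x * Pm y)
    (hpp : ∀ x y, Pm ((x - Pm x) * (y - Pm y)) = 0)
    (d : ℕ → R →+ R)
    (hder : ∀ k, 1 ≤ k → ∀ a b, d k (a * b) = d k a * b + a * d k b)
    (hdP : ∀ k, 1 ≤ k → ∀ x, d k (Pm x) = Pm (d k x))
    (L : R)
    (hhier : ∀ k, 1 ≤ k →
      d k L = (L ^ k - Pm (L ^ k)) * L - L * (L ^ k - Pm (L ^ k)))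
    (Et : ℕ → R)
    (hEt0 : Et 0 = 1) (hEt1 : Et 1 = -L)
    (hEtrec : ∀ n, 1 ≤ n → Et (n + 1) = Pm (Et n) * L)
    (E : ℕ → R)
    (hE0 : E 0 = 1)
    (hErec : ∀ n : ℕ, 1 ≤ n →
      (n : ℚ) • E n = -∑ k ∈ Finset.Icc 1 n,
        (d k (E (n - k)) + E (n - k) * (L ^ k - Pm (L ^ k)))) :
    ∀ n, E n = Et n - Pm (Et n) := by
  have key := Stmt2Aux.Gn Pm d L Et hidem hone hmm hpp hder hdP hhier hEt0 hEt1
    hEtrec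
  have hco : ∀ j, PowerSeries.coeff j (Stmt2Aux.Eser Pm Et)
      = Et j - Pm (Et j) := fun j => PowerSeries.coeff_mk _ _
  intro n
  induction n using Nat.strong_induction_on with
  | _ n ih =>
    rcases n with _ | m
    · rw [hE0, hEt0, hone, sub_zero]
    · have hn1 : 1 ≤ m + 1 := by omega
      have h1 := hErec (m + 1) hn1
      have h2 := key (m + 1) hn1
      simp only [hco] at h2
      have hsum : ∑ k ∈ Finset.Icc 1 (m + 1),
            (d k (E (m + 1 - k)) + E (m + 1 - k) * (L ^ k - Pm (L ^ k)))
          = ∑ k ∈ Finset.Icc 1 (m + 1),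
              (d k (Et (m + 1 - k) - Pm (Et (m + 1 - k)))
                + (Et (m + 1 - k) - Pm (Et (m + 1 - k)))
                  * (L ^ k - Pm (L ^ k))) := by
        refine Finset.sum_congr rfl fun k hk => ?_
        rw [Finset.mem_Icc] at hk
        rw [ih (m + 1 - k) (by omega)]
      rw [hsum, ← h2] at h1
      have hq : ((m + 1 : ℕ) : ℚ) ≠ 0 := Nat.cast_ne_zero.mpr (by omega)
      calc E (m + 1) = ((m + 1 : ℕ) : ℚ)⁻¹ • (((m + 1 : ℕ) : ℚ) • E (m + 1)) :=
            (inv_smul_smul₀ hq _).symm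
        _ = ((m + 1 : ℕ) : ℚ)⁻¹
              • (((m + 1 : ℕ) : ℚ) • (Et (m + 1) - Pm (Et (m + 1)))) := by
            rw [h1]
        _ = Et (m + 1) - Pm (Et (m + 1)) := inv_smul_smul₀ hq _
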